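/- Let Z be a nonempty finite type and P, Q : Z → ℝ probability mass functions with P(z) > 0 and Q(z) > 0 for all z. Define the optimal discriminator D*(z) = P(z) / (P(z) + Q(z)). Then the binary cross-entropy loss attains the value L(D*) = 2 * log 2 − 2 * JS(P, Q). -/

import Mathlib

/-- For strictly positive probability mass functions `P, Q` on a nonempty finite type
`Z`, the optimal discriminator `D* z = P z / (P z + Q z)` attains the binary
cross-entropy value `L(D*) = 2 log 2 - 2 JS(P,Q)`, where
`JS(P,Q) = (1/2) * KL(P‖M) + (1/2) * KL(Q‖M)` with `M z = (P z + Q z) / 2`. -/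
theorem bce_optimal_discriminator_value (Z : Type*) [Fintype Z] [Nonempty Z]
    (P Q : Z → ℝ)
    (hP0 : ∀ z, 0 < P z) (hP1 : ∑ z, P z = 1)
    (hQ0 : ∀ z, 0 < Q z) (hQ1 : ∑ z, Q z = 1) :
    ∑ z, P z * (-Real.log (P z / (P z + Q z))) +
        ∑ z, Q z * (-Real.log (1 - P z / (P z + Q z)))
      = 2 * Real.log 2 -
          2 * ((1 / 2 : ℝ) * ∑ z, P z * Real.log (P z / ((P z + Q z) / 2)) +
               (1 / 2 : ℝ) * ∑ z, Q z * Real.log (Q z / ((P z + Q z) / 2))) := by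
  have hPQ : ∀ z, 0 < P z + Q z := fun z => add_pos (hP0 z) (hQ0 z)
  have h1 : ∀ z, P z * Real.log (P z / ((P z + Q z) / 2))
      = P z * Real.log (P z / (P z + Q z)) + P z * Real.log 2 := by
    intro z
    have hne := (hPQ z).ne'
    have : P z / ((P z + Q z) / 2) = (P z / (P z + Q z)) * 2 := by
      field_simp
    rw [this, Real.log_mul (div_pos (hP0 z) (hPQ z)).ne' two_ne_zero, mul_add]
  have h2 : ∀ z, Q z * Real.log (Q z / ((P z + Q z) / 2))
      = Q z * Real.log (Q z / (P z + Q z)) + Q z * Real.log 2 := by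
    intro z
    have hne := (hPQ z).ne'
    have : Q z / ((P z + Q z) / 2) = (Q z / (P z + Q z)) * 2 := by
      field_simp
    rw [this, Real.log_mul (div_pos (hQ0 z) (hPQ z)).ne' two_ne_zero, mul_add]
  have h3 : ∀ z, Q z * (-Real.log (1 - P z / (P z + Q z)))
      = -(Q z * Real.log (Q z / (P z + Q z))) := by
    intro z
    have hne := (hPQ z).ne'
    have : 1 - P z / (P z + Q z) = Q z / (P z + Q z) := by
      field_simp
      ring
    rw [this]; ring
  simp only [Finset.sum_congr rfl (fun z _ => h1 z),
    Finset.sum_congr rfl (fun z _ => h2 z),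
    Finset.sum_congr rfl (fun z _ => h3 z),
    Finset.sum_add_distrib, ← Finset.sum_mul, hP1, hQ1,
    Finset.sum_neg_distrib]
  have hA : ∀ z, P z * (-Real.log (P z / (P z + Q z)))
      = -(P z * Real.log (P z / (P z + Q z))) := fun z => by ring
  simp only [Finset.sum_congr rfl (fun z _ => hA z), Finset.sum_neg_distrib]
  ring
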